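/- Let J = [−c, c] with 0 < c < 1 and let p be a polynomial of degree at most r−1. Then sup_{x ∈ [−1,1]} |p(x)| ≤ (sup_{x ∈ J} |p(x)|) · T_{r-1}(1/c), where T_{r-1} is the Chebyshev polynomial of the first kind of degree r−1. -/

import Mathlib

open Polynomial Real

local notation "T" => Polynomial.Chebyshev.T ℝ

lemma chebT_natDegree_le (n : ℕ) : (Polynomial.Chebyshev.T ℝ (n : ℤ)).natDegree ≤ n := by
  induction n using Nat.strong_induction_on with
  | _ n ih =>
    match n with
    | 0 => simp [Polynomial.Chebyshev.T_zero]
    | 1 => simp [Polynomial.Chebyshev.T_one]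
    | (m + 2) =>
      have h1 := ih (m+1) (by omega)
      have h0 := ih m (by omega)
      have : ((m : ℤ) + 2) = ((m:ℤ)) + 2 := by push_cast; ring
      rw [show ((m + 2 : ℕ) : ℤ) = (m : ℤ) + 2 by push_cast; ring,
        Polynomial.Chebyshev.T_add_two]
      refine le_trans (Polynomial.natDegree_sub_le _ _) ?_
      have : (2 * X * Polynomial.Chebyshev.T ℝ ((m:ℤ) + 1)).natDegree ≤ m + 2 := by
        refine le_trans (Polynomial.natDegree_mul_le) ?_
        have : (2 * X : ℝ[X]).natDegree ≤ 1 := by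
          refine le_trans (Polynomial.natDegree_mul_le) ?_
          simp
        have h1' : (Polynomial.Chebyshev.T ℝ ((m:ℤ) + 1)).natDegree ≤ m + 1 := by
          rw [show ((m:ℤ)+1) = ((m+1:ℕ):ℤ) by push_cast; ring]; exact h1
        omega
      simp only [max_le_iff]
      constructor
      · exact this
      · omega

lemma chebT_eval_cos (n : ℤ) (θ : ℝ) :
    (Polynomial.Chebyshev.T ℝ n).eval (Real.cos θ) = Real.cos (n * θ) :=
  Polynomial.Chebyshev.T_real_cos θ n

lemma chebT_eval_one (n : ℤ) : (Polynomial.Chebyshev.T ℝ n).eval 1 = 1 := by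
  have := chebT_eval_cos n 0
  simpa using this

lemma chebT_mono_aux (n : ℕ) : ∀ a b : ℝ, 1 ≤ a → a ≤ b →
    (1 ≤ (T (n:ℤ)).eval a) ∧ ((T (n:ℤ)).eval a ≤ (T (n:ℤ)).eval b) ∧
    ((T (n:ℤ)).eval a ≤ (T ((n:ℤ)+1)).eval a) ∧
    ((T ((n:ℤ)+1)).eval a - (T (n:ℤ)).eval a ≤ (T ((n:ℤ)+1)).eval b - (T (n:ℤ)).eval b) := by
  induction n with
  | zero =>
    intro a b ha hab
    simp [Polynomial.Chebyshev.T_zero, Polynomial.Chebyshev.T_one, ha, hab]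
  | succ n ih =>
    intro a b ha hab
    obtain ⟨h1a, h2, h3, h4⟩ := ih a b ha hab
    have key1 : 1 ≤ (T ((n:ℤ)+1)).eval a := le_trans h1a h3
    have key2 : (T ((n:ℤ)+1)).eval a ≤ (T ((n:ℤ)+1)).eval b := by linarith
    have hc : ∀ x : ℝ, (T ((n:ℤ)+2)).eval x =
        2 * x * (T ((n:ℤ)+1)).eval x - (T (n:ℤ)).eval x := by
      intro x
      rw [Polynomial.Chebyshev.T_add_two]
      simp
    have hdiff : ∀ x : ℝ, (T ((n:ℤ)+2)).eval x - (T ((n:ℤ)+1)).eval x =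
        (2*x - 2) * (T ((n:ℤ)+1)).eval x + ((T ((n:ℤ)+1)).eval x - (T (n:ℤ)).eval x) := by
      intro x; rw [hc]; ring
    have hb : (1:ℝ) ≤ b := le_trans ha hab
    have h1b : 1 ≤ (T (n:ℤ)).eval b := (ih b b hb le_rfl).1
    have key1b : 1 ≤ (T ((n:ℤ)+1)).eval b := le_trans h1b (ih b b hb le_rfl).2.2.1
    have prodmono : (2*a - 2) * (T ((n:ℤ)+1)).eval a ≤ (2*b - 2) * (T ((n:ℤ)+1)).eval b := by
      have := mul_le_mul (by linarith : 2*a-2 ≤ 2*b-2) key2 (by linarith) (by linarith)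
      linarith
    rw [show (((n+1:ℕ):ℤ)) = (n:ℤ)+1 by push_cast; ring,
      show ((n:ℤ)+1+1) = (n:ℤ)+2 by ring]
    refine ⟨key1, key2, ?_, ?_⟩
    · have := hdiff a
      nlinarith
    · rw [hdiff a, hdiff b]
      have h3b : (T (n:ℤ)).eval b ≤ (T ((n:ℤ)+1)).eval b := (ih b b hb le_rfl).2.2.1
      nlinarith

lemma chebT_mono (n : ℕ) {a b : ℝ} (ha : 1 ≤ a) (hab : a ≤ b) :
    (T (n:ℤ)).eval a ≤ (T (n:ℤ)).eval b := (chebT_mono_aux n a b ha hab).2.1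

lemma chebT_one_le (n : ℕ) {a : ℝ} (ha : 1 ≤ a) : 1 ≤ (T (n:ℤ)).eval a :=
  (chebT_mono_aux n a a ha le_rfl).1

lemma sign_prod_pos {t u v : ℝ} (ht : 1 < |t|) (hu : |u| ≤ 1) (hv : |v| ≤ 1) :
    0 < (t - u) * (t + v) := by
  rcases lt_abs.mp ht with h | h
  · have := abs_le.mp hu; have := abs_le.mp hv
    have h1 : t - u > 0 := by linarith [(abs_le.mp hu).2]
    have h2 : t + v > 0 := by linarith [(abs_le.mp hv).1]
    exact mul_pos h1 h2
  · have h1 : t - u < 0 := by linarith [(abs_le.mp hu).1]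
    have h2 : t + v < 0 := by linarith [(abs_le.mp hv).2]
    exact mul_pos_of_neg_of_neg h1 h2

lemma cheb_compare (n : ℕ) (q : ℝ[X]) (hq : q.natDegree ≤ n)
    (hb : ∀ x ∈ Set.Icc (-1:ℝ) 1, |q.eval x| ≤ 1) {y : ℝ} (hy : 1 ≤ y) :
    |q.eval y| ≤ (T (n:ℤ)).eval y := by
  rcases Nat.eq_zero_or_pos n with h0 | hn
  · subst h0
    rw [Polynomial.eq_C_of_natDegree_le_zero hq]
    have h1 := hb 0 (by norm_num)
    simp only [Polynomial.eval_C] at h1 ⊢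
    rw [← Polynomial.coeff_zero_eq_eval_zero] at h1
    simpa [Polynomial.Chebyshev.T_zero] using h1
  by_contra hcon
  push_neg at hcon
  set Ty := (T (n:ℤ)).eval y with hTydef
  have hTy1 : 1 ≤ Ty := chebT_one_le n hy
  have hTy0 : 0 < Ty := by linarith
  set lam := q.eval y / Ty with hlam
  have hlam1 : 1 < |lam| := by
    rw [hlam, abs_div, abs_of_pos hTy0]
    rw [lt_div_iff₀ hTy0]; linarith
  set h : ℝ[X] := Polynomial.C lam * T (n:ℤ) - q with hdef
  have hhy : h.eval y = 0 := by
    simp only [hdef, Polynomial.eval_sub, Polynomial.eval_mul, Polynomial.eval_C]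
    rw [hlam]; field_simp
    rw [← hTydef]; ring
  set x : ℕ → ℝ := fun k => Real.cos (k * π / n) with hx
  have hn' : (n:ℝ) ≠ 0 := Nat.cast_ne_zero.mpr hn.ne'
  have hxval : ∀ k : ℕ, (T (n:ℤ)).eval (x k) = (-1:ℝ)^k := by
    intro k
    rw [hx]
    rw [Polynomial.Chebyshev.T_real_cos]
    have : ((n:ℤ):ℝ) * ((k:ℝ) * π / n) = k * π := by
      push_cast; field_simp
    rw [this]
    simpa using Real.cos_nat_mul_pi_sub 0 k
  have hxmem : ∀ k : ℕ, x k ∈ Set.Icc (-1:ℝ) 1 := fun k =>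
    ⟨Real.neg_one_le_cos _, Real.cos_le_one _⟩
  have hxle : ∀ i j : ℕ, i ≤ j → j ≤ n → x j ≤ x i := by
    intro i j hij hjn
    apply Real.cos_le_cos_of_nonneg_of_le_pi
    · positivity
    · rw [div_le_iff₀ (by positivity)]
      have : (j:ℝ) ≤ n := by exact_mod_cast hjn
      nlinarith [Real.pi_pos]
    · have : (i:ℝ) ≤ j := by exact_mod_cast hij
      have hπ := Real.pi_pos
      gcongr
  have hxlt : ∀ i j : ℕ, i < j → j ≤ n → x j < x i := by
    intro i j hij hjn
    apply Real.cos_lt_cos_of_nonneg_of_le_pi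
    · positivity
    · rw [div_le_iff₀ (by positivity)]
      have : (j:ℝ) ≤ n := by exact_mod_cast hjn
      nlinarith [Real.pi_pos]
    · have : (i:ℝ) < j := by exact_mod_cast hij
      have hπ := Real.pi_pos
      have hn0 : (0:ℝ) < n := by positivity
      gcongr
  have hheval : ∀ k : ℕ, h.eval (x k) = lam * (-1:ℝ)^k - q.eval (x k) := by
    intro k
    simp [hdef, hxval k]
  have hsign : ∀ k : ℕ, h.eval (x (k+1)) * h.eval (x k) < 0 := by
    intro k
    rw [hheval, hheval]
    have h1 := hb _ (hxmem k)
    have h2 := hb _ (hxmem (k+1))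
    have key := sign_prod_pos (t := lam * (-1:ℝ)^k) (u := q.eval (x k)) (v := q.eval (x (k+1)))
      (by rw [abs_mul, abs_pow, abs_neg, abs_one, one_pow, mul_one]; exact hlam1) h1 h2
    have : lam * (-1:ℝ)^(k+1) = -(lam * (-1)^k) := by ring
    rw [this]
    nlinarith
  have hroot : ∀ k : ℕ, k < n → ∃ z ∈ Set.Ioo (x (k+1)) (x k), h.eval z = 0 := by
    intro k hk
    have hlt : x (k+1) < x k := hxlt k (k+1) (by omega) (by omega)
    have hcont : ContinuousOn (fun z => h.eval z) (Set.Icc (x (k+1)) (x k)) :=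
      h.continuousOn
    have hs := hsign k
    rcases lt_or_gt_of_ne (a := h.eval (x (k+1))) (b := 0) (by intro h0; rw [h0] at hs; simp at hs) with hneg | hpos
    · have hpos2 : 0 < h.eval (x k) := by nlinarith
      have := intermediate_value_Ioo hlt.le hcont (a := x (k+1)) (b := x k)
      have hmem : (0:ℝ) ∈ Set.Ioo (h.eval (x (k+1))) (h.eval (x k)) := ⟨hneg, hpos2⟩
      obtain ⟨z, hz, hz0⟩ := this hmem
      exact ⟨z, hz, hz0⟩
    · have hneg2 : h.eval (x k) < 0 := by nlinarith
      have := intermediate_value_Ioo' hlt.le hcont (a := x (k+1)) (b := x k)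
      obtain ⟨z, hz, hz0⟩ := this ⟨hneg2, hpos⟩
      exact ⟨z, hz, hz0⟩
  choose z hz1 hz2 using hroot
  set F : Fin (n+1) → ℝ := fun i => if hi : (i:ℕ) < n then z i hi else y with hF
  have hzlt1 : ∀ k (hk : k < n), z k hk < 1 := by
    intro k hk
    have := (hz1 k hk).2
    have : z k hk < x k := this
    have hx0 : x k ≤ x 0 := hxle 0 k (by omega) (by omega)
    have : x 0 = 1 := by simp [hx]
    linarith
  have hFinj : Function.Injective F := by
    have key : ∀ i j : Fin (n+1), i < j → F i ≠ F j := by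
      intro i j hij
      by_cases hjn : (j:ℕ) < n
      · have hin : (i:ℕ) < n := lt_trans hij hjn
        simp only [hF, dif_pos hjn, dif_pos hin]
        have h1 : z j hjn < x (j:ℕ) := (hz1 j hjn).2
        have h2 : x ((i:ℕ)+1) < z i hin := (hz1 i hin).1
        have h3 : x (j:ℕ) ≤ x ((i:ℕ)+1) := hxle _ _ (by omega) (by omega)
        intro heq; rw [heq] at h2; linarith
      · have hin : (i:ℕ) < n := by omega
        simp only [hF, dif_pos hin, dif_neg hjn]
        have := hzlt1 i hin
        intro heq; linarith
    intro i j heq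
    rcases lt_trichotomy i j with h | h | h
    · exact absurd heq (key i j h)
    · exact h
    · exact absurd heq.symm (key j i h)
  have hheval0 : ∀ i : Fin (n+1), h.eval (F i) = 0 := by
    intro i
    by_cases hi : (i:ℕ) < n
    · simp only [hF, dif_pos hi]; exact hz2 i hi
    · simp only [hF, dif_neg hi]; exact hhy
  have hdeg : h.natDegree ≤ n := by
    refine le_trans (Polynomial.natDegree_sub_le _ _) ?_
    have h1 : (Polynomial.C lam * T (n:ℤ)).natDegree ≤ n := by
      refine le_trans Polynomial.natDegree_mul_le ?_
      simp [chebT_natDegree_le n]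
    omega
  have hh0 : h = 0 := by
    apply Polynomial.eq_zero_of_natDegree_lt_card_of_eval_eq_zero h hFinj hheval0
    simpa using Nat.lt_succ_of_le hdeg
  have h1 : h.eval 1 = 0 := by rw [hh0]; simp
  rw [hdef] at h1
  simp only [Polynomial.eval_sub, Polynomial.eval_mul, Polynomial.eval_C] at h1
  have hT1 : (T (n:ℤ)).eval 1 = 1 := by
    have := Polynomial.Chebyshev.T_real_cos 0 (n:ℤ)
    simpa using this
  rw [hT1, mul_one] at h1
  have hlameq : lam = q.eval 1 := by linarith
  have hb1 := hb 1 (by norm_num)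
  rw [← hlameq] at hb1
  linarith

/-- Extremal growth property of Chebyshev polynomials: for a polynomial
p of degree at most r-1 and J = [-c, c] with 0 < c < 1, the sup of |p| on [-1,1] is
bounded by (sup of |p| on J) times T_{r-1}(1/c). -/
theorem stmt18 (r : ℕ) (hr : 1 ≤ r) (c : ℝ) (hc : 0 < c) (hc1 : c < 1)
    (p : Polynomial ℝ) (hp : p.natDegree ≤ r - 1) :
    ∀ x ∈ Set.Icc (-1 : ℝ) 1,
      |p.eval x| ≤ (sSup ((fun y => |p.eval y|) '' Set.Icc (-c) c)) *
        (Polynomial.Chebyshev.T ℝ ((r : ℤ) - 1)).eval (1 / c) := by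
  intro x hx
  obtain ⟨hx1, hx2⟩ := hx
  set n := r - 1 with hn
  have hidx : ((r:ℤ) - 1) = ((n:ℕ):ℤ) := by rw [hn]; omega
  rw [hidx]
  set M := sSup ((fun y => |p.eval y|) '' Set.Icc (-c) c) with hM
  have hcc : -c ≤ c := by linarith
  have hbdd : BddAbove ((fun y => |p.eval y|) '' Set.Icc (-c) c) :=
    (isCompact_Icc.image (continuous_abs.comp p.continuous)).bddAbove
  have hle : ∀ t ∈ Set.Icc (-c) c, |p.eval t| ≤ M := fun t ht =>
    le_csSup hbdd ⟨t, ht, rfl⟩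
  have hM0 : 0 ≤ M := le_trans (abs_nonneg _) (hle 0 ⟨by linarith, by linarith⟩)
  have h1c : 1 ≤ 1/c := by
    rw [le_div_iff₀ hc]; linarith
  have hT1 : 1 ≤ (T ((n:ℕ):ℤ)).eval (1/c) := chebT_one_le n h1c
  rcases eq_or_lt_of_le hM0 with hM0' | hMpos
  · have hp0 : p = 0 := by
      apply Polynomial.eq_zero_of_infinite_isRoot
      apply Set.Infinite.mono (s := Set.Icc (-c) c)
      · intro t ht
        have := hle t ht
        rw [← hM0'] at this
        have h0 : |p.eval t| = 0 := le_antisymm this (abs_nonneg _)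
        exact abs_eq_zero.mp h0
      · exact Set.Icc_infinite (by linarith)
    rw [hp0, ← hM0']
    simp
  · have hcne : c ≠ 0 := hc.ne'
    set q : ℝ[X] := Polynomial.C M⁻¹ * p.comp (Polynomial.C c * Polynomial.X) with hq
    have hqdeg : q.natDegree ≤ n := by
      refine le_trans Polynomial.natDegree_mul_le ?_
      have h1 : (p.comp (Polynomial.C c * Polynomial.X)).natDegree ≤ p.natDegree * 1 := by
        refine le_trans (Polynomial.natDegree_comp_le) ?_
        have : (Polynomial.C c * Polynomial.X : ℝ[X]).natDegree ≤ 1 := by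
          refine le_trans Polynomial.natDegree_mul_le ?_; simp
        exact Nat.mul_le_mul_left _ this
      simp only [Polynomial.natDegree_C, zero_add]
      omega
    have hqeval : ∀ t : ℝ, q.eval t = M⁻¹ * p.eval (c * t) := by
      intro t; simp [hq, Polynomial.eval_comp]
    have hqb : ∀ t ∈ Set.Icc (-1:ℝ) 1, |q.eval t| ≤ 1 := by
      intro t ht
      obtain ⟨ht1, ht2⟩ := ht
      rw [hqeval, abs_mul, abs_inv, abs_of_pos hMpos]
      have hmem : c * t ∈ Set.Icc (-c) c := ⟨by nlinarith, by nlinarith⟩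
      have := hle _ hmem
      rw [inv_mul_le_iff₀ hMpos, mul_one]
      exact this
    set y := x / c with hy
    have hxy : x = c * y := by rw [hy]; field_simp
    have hpx : |p.eval x| = M * |q.eval y| := by
      rw [hqeval, ← hxy, abs_mul, abs_inv, abs_of_pos hMpos]
      field_simp
    rw [hpx]
    have hyabs : |y| ≤ 1/c := by
      rw [hy, abs_div, abs_of_pos hc, div_le_div_iff_of_pos_right hc]
      have : |x| ≤ 1 := abs_le.mpr ⟨hx1, hx2⟩
      nlinarith
    have key : |q.eval y| ≤ (T ((n:ℕ):ℤ)).eval (1/c) := by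
      rcases le_or_gt |y| 1 with hy1 | hy1
      · exact le_trans (hqb y (abs_le.mp hy1)) hT1
      · rcases le_or_gt 1 y with hyy | hyy
        · exact le_trans (cheb_compare n q hqdeg hqb hyy)
            (chebT_mono n hyy (le_trans (le_abs_self y) hyabs))
        · have hyneg : y ≤ -1 := by
            rcases abs_cases y with ⟨h1, _⟩ | ⟨h1, _⟩ <;> linarith
          set q' : ℝ[X] := q.comp (-Polynomial.X) with hq'
          have hq'deg : q'.natDegree ≤ n := by
            refine le_trans Polynomial.natDegree_comp_le ?_
            have : (-Polynomial.X : ℝ[X]).natDegree ≤ 1 := by simp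
            calc q.natDegree * (-Polynomial.X : ℝ[X]).natDegree ≤ q.natDegree * 1 :=
              Nat.mul_le_mul_left _ this
            _ ≤ n := by omega
          have hq'eval : ∀ t : ℝ, q'.eval t = q.eval (-t) := by
            intro t; simp [hq', Polynomial.eval_comp]
          have hq'b : ∀ t ∈ Set.Icc (-1:ℝ) 1, |q'.eval t| ≤ 1 := by
            intro t ht
            obtain ⟨ht1, ht2⟩ := ht
            rw [hq'eval]
            exact hqb (-t) ⟨by linarith, by linarith⟩
          have h1y : 1 ≤ -y := by linarith
          have := cheb_compare n q' hq'deg hq'b h1y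
          rw [hq'eval, neg_neg] at this
          refine le_trans this (chebT_mono n h1y ?_)
          have := neg_le_abs y
          linarith [le_trans (neg_le_abs y) hyabs]
    calc M * |q.eval y| ≤ M * (T ((n:ℕ):ℤ)).eval (1/c) := by
          exact mul_le_mul_of_nonneg_left key hM0
    _ = _ := rfl
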